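/- Assume there is a real sequence (L_m)_{m≥0} such that L^r(k) := ∑_{m≥0} L_m·k^m converges absolutely for every integer k ≥ 1 and B^r_k = L^r(k)/k for all k ≥ 1. Then the formal power series Y(z) := ∑_{k≥1} B^r_k·B_{2(k−1)}(r)·z^k solves Y' = L^r(1+θ)·ψ_μ(Y), where θ = z·d/dz; that is, for every n ≥ 0, (n+1)·[z^{n+1}]Y = L^r(n+1)·[z^n](ψ_μ∘Y), where ψ_μ(Y) = 1 + ∑_{k≥1} μ_{k+1}·Y(z)^k is the formal composition. -/

import Mathlib

open scoped Classical

/-- Rooted plane trees: a tree is a root together with the ordered list of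
the subtrees hanging from its children (left-to-right order). -/
inductive PTree where
  | node : List PTree → PTree

namespace PTree

instance : Inhabited PTree := ⟨.node []⟩

/-- number of nodes -/
def size : PTree → ℕ
  | node l => 1 + (l.attach.map (fun c => size c.1)).sum
decreasing_by
  have := List.sizeOf_lt_of_mem c.2
  simp only [node.sizeOf_spec]; omega

/-- tree factorial: `t! = |t| * ∏ᵢ tᵢ!` -/
def tfact : PTree → ℕ
  | node l => size (node l) * (l.attach.map (fun c => tfact c.1)).prod
decreasing_by
  have := List.sizeOf_lt_of_mem c.2
  simp only [node.sizeOf_spec]; omega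

/-- Shape equivalence: two plane trees have the same underlying rooted tree,
i.e. there is a bijection between children matching shape-equivalent subtrees. -/
inductive ShapeEq : PTree → PTree → Prop
  | node {l₁ l₂ : List PTree} (e : Fin l₁.length ≃ Fin l₂.length)
      (h : ∀ i, ShapeEq (l₁.get i) (l₂.get (e i))) :
      ShapeEq (node l₁) (node l₂)

lemma size_pos (t : PTree) : 0 < t.size := by
  cases t; simp [size]

/-- The plane tree encoded by a parent function `p : Fin n → Fin n`:
`shapeAux n p fuel i` is the subtree rooted at node `i`, whose children are the
`j` with `p j = i` and `i < j` (ordered by label). `fuel = n` suffices. -/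
def shapeAux (n : ℕ) (p : Fin n → Fin n) : ℕ → Fin n → PTree
  | 0, _ => node []
  | fuel+1, i =>
      node (((List.finRange n).filter (fun j => decide (p j = i ∧ i < j))).map
        (shapeAux n p fuel))

/-- The plane tree encoded by a parent function (rooted at node `0`). -/
def shapeOf {n : ℕ} (p : Fin n → Fin n) : PTree :=
  if h : 0 < n then shapeAux n p n ⟨0, h⟩ else node []

/-- `alpha t` is the number of rooted labelled (increasing) trees of shape `t`:
labelled trees are encoded by their parent function, the root carrying the
label `0` and labels increasing away from the root. -/
noncomputable def alpha (t : PTree) : ℕ :=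
  Nat.card {p : Fin t.size → Fin t.size //
    p ⟨0, t.size_pos⟩ = ⟨0, t.size_pos⟩ ∧
    (∀ j : Fin t.size, 0 < (j : ℕ) → (p j : ℕ) < j) ∧
    ShapeEq (shapeOf p) t}

/-- `kappa t` is the number of rooted plane trees of shape `t`. -/
noncomputable def kappa (t : PTree) : ℕ := Nat.card {t' : PTree // ShapeEq t' t}

/-- symmetry factor: `σ(B₊(t₁^{n₁},…,t_m^{n_m})) = ∏ᵢ nᵢ! σ(tᵢ)^{nᵢ}`. -/
noncomputable def sym : PTree → ℕ
  | node l =>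
      (∏ j : Fin l.length,
        (l.take ((j : ℕ) + 1)).countP (fun c => decide (ShapeEq c (l.get j)))) *
      (l.attach.map (fun c => sym c.1)).prod
decreasing_by
  have := List.sizeOf_lt_of_mem c.2
  simp only [node.sizeOf_spec]; omega

/-- elementary differentials: `δ_• = 1`, `δ_t = k! ψ_k ∏ᵢ δ_{tᵢ}`. -/
def delta (ψ : ℕ → ℝ) : PTree → ℝ
  | node l =>
      (Nat.factorial l.length : ℝ) * ψ l.length *
      (l.attach.map (fun c => delta ψ c.1)).prod
decreasing_by
  have := List.sizeOf_lt_of_mem c.2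
  simp only [node.sizeOf_spec]; omega

/-- bare Green function with weights `B`: `B(t) = B_{|t|} ∏ᵢ B(tᵢ)`. -/
def bare (B : ℕ → ℝ) : PTree → ℝ
  | node l => B (size (node l)) * (l.attach.map (fun c => bare B c.1)).prod
decreasing_by
  have := List.sizeOf_lt_of_mem c.2
  simp only [node.sizeOf_spec]; omega

/-- `wt ψ t = ∏_{v ∈ t} ψ (d v)` where `d v` is the outdegree of `v`. -/
def wt (ψ : ℕ → ℝ) : PTree → ℝ
  | node l => ψ l.length * (l.attach.map (fun c => wt ψ c.1)).prod
decreasing_by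
  have := List.sizeOf_lt_of_mem c.2
  simp only [node.sizeOf_spec]; omega

/-- `nodeProd B t = ∏_{w ≠ root} B_{|t_w|}`, product over non-root nodes of `t`. -/
def nodeProd (B : ℕ → ℝ) : PTree → ℝ
  | node l => (l.attach.map (fun c => B (size c.1) * nodeProd B c.1)).prod
decreasing_by
  have := List.sizeOf_lt_of_mem c.2
  simp only [node.sizeOf_spec]; omega

/-- `R` is a set of representatives of the rooted trees with `n` nodes:
every plane tree of size `n` is shape-equivalent to exactly one member of `R`. -/
def IsTransversal (n : ℕ) (R : Finset PTree) : Prop :=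
  (∀ t ∈ R, size t = n) ∧
  ∀ t : PTree, size t = n → ∃! u, u ∈ R ∧ ShapeEq t u

end PTree

namespace PTree

lemma attach_map_eq {α : Type*} (l : List PTree) (f : PTree → α) :
    l.attach.map (fun c => f c.1) = l.map f := by
  conv_rhs => rw [← List.attach_map_subtype_val l]
  rw [List.map_map]
  rfl

lemma size_node (l : List PTree) : size (node l) = 1 + (l.map size).sum := by
  rw [size, attach_map_eq]

lemma nodeProd_node (B : ℕ → ℝ) (l : List PTree) :
    nodeProd B (node l) = (l.map (fun c => B (size c) * nodeProd B c)).prod := by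
  rw [nodeProd]
  exact congrArg List.prod (attach_map_eq l (fun c => B (size c) * nodeProd B c))

lemma wt_node (ψ : ℕ → ℝ) (l : List PTree) :
    wt ψ (node l) = ψ l.length * (l.map (wt ψ)).prod := by
  rw [wt, attach_map_eq]

/-- the list of subtrees at the root -/
def children : PTree → List PTree
  | node l => l

@[simp] lemma children_node (l : List PTree) : (node l).children = l := rfl

lemma node_children (t : PTree) : node t.children = t := by cases t; rfl

lemma size_children (t : PTree) : size t = 1 + (t.children.map size).sum := by
  cases t; exact size_node _

end PTree

open PTree in
/-- Suppose `B^r_k = β²r(2k−1) = L^r(k)/k` for a master function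
`L^r(k) = ∑ₘ Lₘ kᵐ`.  With `B_{2k}(r)` the limiting normalized traces
(`B_0(r) = 1` and `B_{2k}(r) = ∑_{t∈ℱ_{k+1}} (∏_{w≠root} B^r_{|t_w|})·(∏_v μ_{d(v)+1})`),
the formal power series `Y(z) = ∑_{k≥1} B^r_k·B_{2(k−1)}(r)·zᵏ` solves
`Y' = L^r(1+θ)ψ_μ(Y)`; coefficientwise: `(n+1)[z^{n+1}]Y = L^r(n+1)·cₙ`, where
`cₙ = [zⁿ](ψ_μ∘Y)` and `ψ_μ(z) = 1 + ∑_{k≥1} μ_{k+1} zᵏ`. -/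
theorem wigner_trace_series_solves_master_equation
    (β : ℝ) (hβ : 0 < β) (r : ℕ → ℝ) (μm : ℕ → ℝ) (hμ1 : μm 1 = 1)
    (Br : ℕ → ℝ) (hBrdef : ∀ k : ℕ, 1 ≤ k → Br k = β ^ 2 * r (2 * k - 1))
    (F : ℕ → Finset PTree) (hF : ∀ n (t : PTree), t ∈ F n ↔ size t = n)
    (B2 : ℕ → ℝ) (hB20 : B2 0 = 1)
    (hB2 : ∀ k : ℕ, 1 ≤ k → B2 k =
      ∑ t ∈ F (k + 1), nodeProd Br t * wt (fun d => μm (d + 1)) t)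
    (L : ℕ → ℝ)
    (hL : ∀ k : ℕ, 1 ≤ k → Summable (fun m => |L m| * (k : ℝ) ^ m))
    (Lr : ℕ → ℝ) (hLr : ∀ k : ℕ, Lr k = ∑' m : ℕ, L m * (k : ℝ) ^ m)
    (hBr : ∀ k : ℕ, 1 ≤ k → Br k = Lr k / (k : ℝ))
    (Y : PowerSeries ℝ)
    (hY : Y = PowerSeries.mk (fun k => if k = 0 then 0 else Br k * B2 (k - 1)))
    (c : ℕ → ℝ)
    (hc : ∀ n, c n = ∑ j ∈ Finset.range (n + 1),
      (if j = 0 then 1 else μm (j + 1)) * PowerSeries.coeff n (Y ^ j)) :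
    ∀ n : ℕ, ((n : ℝ) + 1) * PowerSeries.coeff (n + 1) Y = Lr (n + 1) * c n := by
  classical
  set ψ : ℕ → ℝ := fun d => μm (d + 1) with hψ
  set g : PTree → ℝ := fun t => Br t.size * (nodeProd Br t * wt ψ t) with hg
  set H : PTree → ℝ := fun t => (t.children.map g).prod with hH
  -- basic facts about trees of small size
  have hsize1 : ∀ t : PTree, size t = 1 → t = node [] := by
    rintro ⟨l⟩ h
    rw [size_node] at h
    cases l with
    | nil => rfl
    | cons a l' =>
        exfalso
        have ha := size_pos a
        simp only [List.map_cons, List.sum_cons] at h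
        omega
  have hF0 : F 0 = ∅ := by
    ext t
    simp only [hF, Finset.notMem_empty, iff_false]
    exact (size_pos t).ne'
  have hF1 : F 1 = {node []} := by
    ext t
    simp only [hF, Finset.mem_singleton]
    constructor
    · exact hsize1 t
    · rintro rfl; simp [size_node]
  -- Lemma A: coefficients of Y as sums over trees
  have hA : ∀ k : ℕ, PowerSeries.coeff k Y = ∑ t ∈ F k, g t := by
    intro k
    rw [hY, PowerSeries.coeff_mk]
    match k with
    | 0 => simp [hF0]
    | 1 =>
        simp only [hF1, Finset.sum_singleton]
        rw [if_neg one_ne_zero]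
        norm_num [hB20, hg, hψ, size_node, nodeProd_node, wt_node, hμ1]
    | (m + 2) =>
        rw [if_neg (by omega), show m + 2 - 1 = m + 1 by omega, hB2 (m + 1) (by omega),
          Finset.mul_sum]
        refine Finset.sum_congr rfl fun t ht => ?_
        have hst : size t = m + 2 := (hF _ t).mp ht
        simp only [hg, hst]
  -- expansion of the weight of a tree via its children
  have hE : ∀ t : PTree,
      nodeProd Br t * wt ψ t = ψ t.children.length * H t := by
    rintro ⟨l⟩
    rw [hH]
    simp only [children_node]
    rw [nodeProd_node, wt_node, mul_left_comm]
    congr 1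
    rw [← List.prod_map_mul]
    congr 1
    refine List.map_congr_left fun c _ => ?_
    simp only [Pi.mul_apply, hg]
    ring
  -- key lemma: coefficients of powers of Y as sums over trees with given root degree
  have key : ∀ j n' : ℕ, PowerSeries.coeff n' (Y ^ j) =
      ∑ t ∈ (F (n' + 1)).filter (fun t => t.children.length = j), H t := by
    intro j
    induction j with
    | zero =>
        intro n'
        rw [pow_zero, PowerSeries.coeff_one]
        by_cases h0 : n' = 0
        · subst h0
          rw [if_pos rfl]
          have hfilt : (F 1).filter (fun t => t.children.length = 0) = {node []} := by
            rw [hF1]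
            ext t
            simp only [Finset.mem_filter, Finset.mem_singleton]
            constructor
            · exact fun h => h.1
            · rintro rfl; simp
          rw [hfilt, Finset.sum_singleton, hH]
          simp
        · rw [if_neg h0]
          have hfilt : (F (n' + 1)).filter (fun t => t.children.length = 0) = ∅ := by
            rw [Finset.eq_empty_iff_forall_notMem]
            rintro ⟨l⟩ hmem
            rw [Finset.mem_filter] at hmem
            obtain ⟨h1, h2⟩ := hmem
            have hs := (hF _ _).mp h1
            simp only [children_node] at h2
            rw [List.length_eq_zero_iff] at h2
            subst h2
            rw [size_node] at hs
            simp only [List.map_nil, List.sum_nil] at hs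
            omega
          rw [hfilt, Finset.sum_empty]
    | succ j ih =>
        intro n'
        rw [pow_succ', PowerSeries.coeff_mul]
        have step1 : ∀ p ∈ Finset.HasAntidiagonal.antidiagonal n',
            (PowerSeries.coeff p.1 Y) * (PowerSeries.coeff p.2 (Y ^ j)) =
            ∑ s ∈ F p.1, ∑ t ∈ (F (p.2 + 1)).filter (fun t => t.children.length = j),
              g s * H t := by
          intro p _
          rw [hA, ih, Finset.sum_mul]
          exact Finset.sum_congr rfl fun s _ => Finset.mul_sum _ _ _
        rw [Finset.sum_congr rfl step1]
        have step2 : ∀ p ∈ Finset.HasAntidiagonal.antidiagonal n',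
            (∑ s ∈ F p.1, ∑ t ∈ (F (p.2 + 1)).filter (fun t => t.children.length = j),
              g s * H t)
            = ∑ q ∈ (F p.1).sigma
                (fun _ => (F (p.2 + 1)).filter (fun t => t.children.length = j)),
                g q.1 * H q.2 :=
          fun p _ => Finset.sum_sigma' _ _ _
        rw [Finset.sum_congr rfl step2, Finset.sum_sigma']
        -- now a bijection with trees of size n'+1 and root degree j+1
        refine Finset.sum_bij (fun x _ => PTree.node (x.2.1 :: x.2.2.children)) ?_ ?_ ?_ ?_
        · rintro ⟨⟨a, b⟩, s, t⟩ hx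
          dsimp only
          simp only [Finset.mem_sigma, Finset.HasAntidiagonal.mem_antidiagonal, Finset.mem_filter] at hx
          obtain ⟨hab, hs, ⟨htF, htd⟩⟩ := hx
          have hss : size s = a := (hF _ _).mp hs
          have hts : size t = b + 1 := (hF _ _).mp htF
          rw [Finset.mem_filter]
          constructor
          · rw [hF, size_node, List.map_cons, List.sum_cons]
            have := size_children t
            omega
          · simp [htd]
        · rintro ⟨⟨a, b⟩, s, t⟩ hx ⟨⟨a', b'⟩, s', t'⟩ hx' heq
          simp only [Finset.mem_sigma, Finset.HasAntidiagonal.mem_antidiagonal, Finset.mem_filter] at hx hx'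
          obtain ⟨hab, hs, ⟨htF, -⟩⟩ := hx
          obtain ⟨hab', hs', ⟨htF', -⟩⟩ := hx'
          simp only [PTree.node.injEq, List.cons.injEq] at heq
          obtain ⟨hse, hce⟩ := heq
          have hte : t = t' := by
            rw [← node_children t, ← node_children t', hce]
          subst hse hte
          have ha : a = a' := by
            rw [← (hF _ _).mp hs, ← (hF _ _).mp hs']
          subst ha
          have hb : b = b' := by omega
          subst hb
          rfl
        · rintro ⟨l⟩ hb
          rw [Finset.mem_filter] at hb
          obtain ⟨hbF, hbd⟩ := hb
          simp only [children_node] at hbd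
          cases l with
          | nil => simp at hbd
          | cons s l' =>
              have hs := (hF _ _).mp hbF
              rw [size_node, List.map_cons, List.sum_cons] at hs
              refine ⟨⟨(size s, (l'.map size).sum), s, node l'⟩, ?_, ?_⟩
              · simp only [Finset.mem_sigma, Finset.HasAntidiagonal.mem_antidiagonal, Finset.mem_filter]
                refine ⟨by omega, (hF _ _).mpr rfl, (hF _ _).mpr ?_, ?_⟩
                · rw [size_node]; omega
                · simp only [children_node]
                  simpa using hbd
              · simp
        · rintro ⟨⟨a, b⟩, s, t⟩ hx
          dsimp only
          simp only [hH, children_node, List.map_cons, List.prod_cons]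
  -- rewrite c using ψ
  have hc_eq : ∀ m : ℕ, c m = ∑ j ∈ Finset.range (m + 1),
      ψ j * PowerSeries.coeff m (Y ^ j) := by
    intro m
    rw [hc]
    refine Finset.sum_congr rfl fun j _ => ?_
    congr 1
    by_cases hj : j = 0
    · subst hj; simp [hψ, hμ1]
    · rw [if_neg hj]
  -- main combinatorial identity: c m = B2 m
  have hcB : ∀ m : ℕ, c m = B2 m := by
    intro m
    rw [hc_eq]
    match m with
    | 0 =>
        rw [hB20]
        simp [hψ, hμ1]
    | (m + 1) =>
        rw [hB2 (m + 1) (by omega)]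
        calc ∑ j ∈ Finset.range (m + 2), ψ j * PowerSeries.coeff (m + 1) (Y ^ j)
            = ∑ j ∈ Finset.range (m + 2),
                ∑ t ∈ (F (m + 2)).filter (fun t => t.children.length = j),
                  ψ t.children.length * H t := by
              refine Finset.sum_congr rfl fun j _ => ?_
              rw [key, Finset.mul_sum]
              exact Finset.sum_congr rfl fun t ht => by
                rw [(Finset.mem_filter.mp ht).2]
          _ = ∑ t ∈ F (m + 2), ψ t.children.length * H t := by
              apply Finset.sum_fiberwise_of_maps_to
              intro t ht
              rw [Finset.mem_range]
              have hs := (hF _ t).mp ht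
              have h1 : t.children.length ≤ (t.children.map size).sum := by
                have h2 := List.length_le_sum_of_one_le (t.children.map size) ?_
                · simpa using h2
                · intro i hi
                  obtain ⟨cc, -, rfl⟩ := List.mem_map.mp hi
                  exact size_pos cc
              have h3 := size_children t
              omega
          _ = ∑ t ∈ F (m + 2), nodeProd Br t * wt ψ t :=
              Finset.sum_congr rfl fun t _ => (hE t).symm
  -- conclusion
  intro n
  have hco : PowerSeries.coeff (n + 1) Y = Br (n + 1) * B2 n := by
    rw [hY, PowerSeries.coeff_mk]
    simp
  have hb : Br (n + 1) = Lr (n + 1) / ((n : ℝ) + 1) := by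
    have h := hBr (n + 1) (by omega)
    rwa [Nat.cast_add, Nat.cast_one] at h
  have hne : ((n : ℝ) + 1) ≠ 0 := by positivity
  rw [hco, ← hcB n, hb]
  field_simp
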